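/- arXiv:0802.1886 — 6 statements merged into one kernel-verified Lean document; each statement's English description precedes it below -/
import Mathlib

section
/- Let K be a CM-field of degree 2g that is Galois over ℚ with cyclic Galois group generated by σ. Let ξ ∈ K and set π = ∏_{i=1}^{g} σ^i(ξ). Then π · σ^g(π) = N_{K/ℚ}(ξ), and for every field embedding φ : K → ℂ one has |φ(π)|² = N_{K/ℚ}(ξ). In particular, if ξ is an algebraic integer and N_{K/ℚ}(ξ) = q is a prime number, then π is an algebraic integer all of whose complex embeddings have absolute value √q (a q-Weil number in K). -/
/-- A number field is totally complex if no embedding into `ℂ` has image contained in `ℝ`. -/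
def IsTotallyComplexField (K : Type*) [Field K] : Prop :=
  ∀ φ : K →+* ℂ, ∃ x : K, (φ x).im ≠ 0

/-- A CM-field: a totally complex field that is a degree-2 extension of a totally real
subfield (a subfield all of whose complex embeddings have image in `ℝ`). -/
def IsCMField (K : Type*) [Field K] : Prop :=
  IsTotallyComplexField K ∧
    ∃ F : Subfield K, (∀ φ : F →+* ℂ, ∀ x : F, (φ x).im = 0) ∧ Module.finrank F K = 2

/-- Let `K` be a CM-field of degree `2g`, Galois over `ℚ` with cyclic
Galois group generated by `σ`.  For `ξ ∈ K` put `π = ∏_{i=1}^{g} σ^i(ξ)`.  Then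
`π ⬝ σ^g(π) = N_{K/ℚ}(ξ)`, every complex embedding `φ` satisfies
`|φ(π)|² = N_{K/ℚ}(ξ)`, and if `ξ` is an algebraic integer whose norm is a prime `q`,
then `π` is a `q`-Weil number: an algebraic integer all of whose complex embeddings
have absolute value `√q`. -/
theorem typeNorm_cyclic_weil_number
    (K : Type*) [Field K] [NumberField K] [IsGalois ℚ K] (g : ℕ) (hg : 0 < g)
    (hdeg : Module.finrank ℚ K = 2 * g)
    (hCM : IsCMField K)
    (σ : K ≃ₐ[ℚ] K) (hord : orderOf σ = 2 * g)
    (hcyc : ∀ τ : K ≃ₐ[ℚ] K, τ ∈ Subgroup.zpowers σ)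
    (ξ : K) (π : K) (hπ : π = ∏ i ∈ Finset.Icc 1 g, (σ ^ i) ξ) :
    π * (σ ^ g) π = algebraMap ℚ K (Algebra.norm ℚ ξ) ∧
    (∀ φ : K →+* ℂ, ‖φ π‖ ^ 2 = ((Algebra.norm ℚ ξ : ℚ) : ℝ)) ∧
    (IsIntegral ℤ ξ → ∀ q : ℕ, Nat.Prime q → Algebra.norm ℚ ξ = (q : ℚ) →
      IsIntegral ℤ π ∧ ∀ φ : K →+* ℂ, ‖φ π‖ = Real.sqrt q) := by
  have h2g : 0 < 2 * g := by omega
  have horder : σ ^ (2 * g) = 1 := by rw [← hord]; exact pow_orderOf_eq_one σ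
  -- Step B: product over all automorphisms equals product over range (2g)
  have hB : ∏ τ : K ≃ₐ[ℚ] K, τ ξ = ∏ i ∈ Finset.range (2 * g), (σ ^ i) ξ := by
    refine (Finset.prod_bij (fun i _ => σ ^ i) (fun a _ => Finset.mem_univ _)
      ?_ ?_ (fun a _ => rfl)).symm
    · intro a ha b hb hab
      exact pow_injOn_Iio_orderOf (x := σ)
        (by simpa [hord] using Finset.mem_range.mp ha)
        (by simpa [hord] using Finset.mem_range.mp hb) hab
    · intro τ _
      obtain ⟨k, hk0⟩ := hcyc τ
      have hk : σ ^ k = τ := hk0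
      refine ⟨(k % (2 * g : ℤ)).toNat, Finset.mem_range.mpr ?_, ?_⟩
      · have h1 : k % (2 * g : ℤ) < 2 * g := Int.emod_lt_of_pos k (by exact_mod_cast h2g)
        omega
      · have h0 : (0 : ℤ) ≤ k % (2 * g : ℤ) := Int.emod_nonneg k (by exact_mod_cast h2g.ne')
        have h2 : σ ^ ((k % (2 * g : ℤ)).toNat : ℤ) = τ := by
          rw [Int.toNat_of_nonneg h0,
            show ((2 : ℤ) * g) = (orderOf σ : ℤ) by rw [hord]; push_cast; ring,
            zpow_mod_orderOf, hk]
        rw [zpow_natCast] at h2; exact h2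
  -- Step C: shift range to Icc 1 (2g)
  have hC : ∏ i ∈ Finset.range (2 * g), (σ ^ i) ξ = ∏ i ∈ Finset.Icc 1 (2 * g), (σ ^ i) ξ := by
    rw [Finset.range_eq_Ico, Finset.prod_eq_prod_Ico_succ_bot h2g]
    rw [show Finset.Icc 1 (2 * g) = Finset.Ico 1 (2 * g + 1) by rw [Finset.Ico_add_one_right_eq_Icc]]
    rw [Finset.prod_Ico_succ_top (by omega)]
    rw [pow_zero, horder, mul_comm]
  -- Step D
  have hD : π * (σ ^ g) π = ∏ i ∈ Finset.Icc 1 (2 * g), (σ ^ i) ξ := by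
    have hmap : (σ ^ g) π = ∏ i ∈ Finset.Icc (g + 1) (2 * g), (σ ^ i) ξ := by
      rw [hπ, map_prod, ← show Finset.map (addLeftEmbedding g) (Finset.Icc 1 g)
          = Finset.Icc (g + 1) (2 * g) by rw [Finset.map_add_left_Icc]; ring_nf,
        Finset.prod_map]
      refine Finset.prod_congr rfl fun i _ => ?_
      simp [addLeftEmbedding, ← pow_add, add_comm g i, ← AlgEquiv.mul_apply, ← pow_add]
      rw [← Function.iterate_add_apply, add_comm]
    rw [hmap, hπ, show Finset.Icc 1 g = Finset.Ioc 0 g from Finset.Icc_add_one_left_eq_Ioc 0 g,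
      show Finset.Icc (g+1) (2*g) = Finset.Ioc g (2*g) from Finset.Icc_add_one_left_eq_Ioc g (2*g),
      show Finset.Icc 1 (2*g) = Finset.Ioc 0 (2*g) from Finset.Icc_add_one_left_eq_Ioc 0 (2*g),
      ← Finset.prod_union (by simp only [Finset.disjoint_left, Finset.mem_Ioc]; omega),
      Finset.Ioc_union_Ioc_eq_Ioc (Nat.zero_le g) (by omega)]
  have main1 : π * (σ ^ g) π = algebraMap ℚ K (Algebra.norm ℚ ξ) := by
    rw [hD, Algebra.norm_eq_prod_automorphisms, hB, hC]
  -- complex conjugation is φ ∘ σ^g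
  have hconj : ∀ φ : K →+* ℂ, ∀ x : K, (starRingEnd ℂ) (φ x) = φ ((σ ^ g) x) := by
    intro φ
    -- the map τ ↦ φ ∘ τ is bijective
    have hcard : Fintype.card (K ≃ₐ[ℚ] K) = Fintype.card (K →+* ℂ) := by
      rw [← Nat.card_eq_fintype_card, IsGalois.card_aut_eq_finrank, NumberField.Embeddings.card]
    set F : (K ≃ₐ[ℚ] K) → (K →+* ℂ) := fun τ => φ.comp (τ : K →+* K) with hF
    have hinj : Function.Injective F := by
      intro τ₁ τ₂ h
      ext x
      exact φ.injective (congrArg (fun f => f x) h : _)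
    have hsurj : Function.Surjective F :=
      (Fintype.bijective_iff_injective_and_card F).mpr ⟨hinj, hcard⟩ |>.2
    obtain ⟨τ, hτ⟩ := hsurj ((starRingEnd ℂ).comp φ)
    have hτx : ∀ x, φ (τ x) = (starRingEnd ℂ) (φ x) := fun x =>
      (congrArg (fun f => f x) hτ : _)
    -- τ has order 2
    have hτ2 : τ * τ = 1 := by
      ext x
      apply φ.injective
      simp [AlgEquiv.mul_apply, hτx, Complex.conj_conj]
    have hτne : τ ≠ 1 := by
      intro h
      obtain ⟨x, hx⟩ := hCM.1 φ
      apply hx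
      have hxeq := hτx x
      rw [h] at hxeq
      simp only [AlgEquiv.one_apply] at hxeq
      have h2 := congrArg Complex.im hxeq
      simp only [Complex.conj_im] at h2
      linarith
    -- τ = σ ^ g
    have : τ = σ ^ g := by
      obtain ⟨k, hk0⟩ := hcyc τ
      have hk : σ ^ k = τ := hk0
      have hgk : (g : ℤ) ∣ k := by
        have h1 : σ ^ (2 * k) = 1 := by
          rw [show (2 : ℤ) * k = k + k by ring, zpow_add, hk, hτ2]
        have hdvd : ((orderOf σ : ℤ)) ∣ 2 * k := orderOf_dvd_iff_zpow_eq_one.mpr h1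
        rw [hord] at hdvd
        have h2 : (2 * (g : ℤ)) ∣ 2 * k := by exact_mod_cast hdvd
        obtain ⟨t, ht⟩ := h2
        exact ⟨t, by linarith⟩
      obtain ⟨t, ht⟩ := hgk
      have hsg2 : (σ ^ g) * (σ ^ g) = 1 := by
        rw [← pow_add, show g + g = 2 * g by ring, horder]
      rcases Int.even_or_odd t with ⟨s, hs⟩ | ⟨s, hs⟩
      · exfalso
        apply hτne
        rw [← hk, ht, hs]
        rw [show (g : ℤ) * (s + s) = (2 * g : ℕ) * s by push_cast; ring]
        rw [zpow_mul, zpow_natCast, horder, one_zpow]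
      · rw [← hk, ht, hs]
        rw [show (g : ℤ) * (2 * s + 1) = (2 * g : ℕ) * s + g by push_cast; ring]
        rw [zpow_add, zpow_mul, zpow_natCast, horder, one_zpow, one_mul,
          zpow_natCast]
    intro x
    rw [← this, hτx]
  have main2 : ∀ φ : K →+* ℂ, ‖φ π‖ ^ 2 = ((Algebra.norm ℚ ξ : ℚ) : ℝ) := by
    intro φ
    have : ((Complex.normSq (φ π) : ℂ)) = (((Algebra.norm ℚ ξ : ℚ) : ℝ) : ℂ) := by
      rw [← Complex.mul_conj, hconj φ, ← map_mul, main1]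
      simp [map_ratCast]
    have := Complex.ofReal_injective (by exact_mod_cast this)
    rw [← Complex.sq_norm] at this
    exact this
  refine ⟨main1, main2, fun hint q hq hnorm => ?_⟩
  have hπint : IsIntegral ℤ π := by
    rw [hπ]
    exact IsIntegral.prod _ fun i _ =>
      hint.map (((σ ^ i : K ≃ₐ[ℚ] K) : K →+* K).toIntAlgHom)
  refine ⟨hπint, fun φ => ?_⟩
  have h := main2 φ
  rw [hnorm] at h
  have : ‖φ π‖ ^ 2 = (q : ℝ) := by rw [h]; norm_cast
  rw [← this, Real.sqrt_sq (norm_nonneg _)]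
end

section
/- Let K ⊆ ℂ be a CM-field of degree 2g, let L ⊆ ℂ be the normal closure of K over ℚ, let G = Gal(L/ℚ), let c ∈ G be the restriction of complex conjugation to L, and let H = {γ ∈ G : γ(x) = x for all x ∈ K}. Let S ⊆ G satisfy S·H = S and let G be the disjoint union of S and cS. Define Ĥ = {γ ∈ G : γS = S} and K̂ = L^Ĥ. Let R ⊆ S be any set of representatives for the left cosets of H contained in S (so S is the disjoint union of ρH for ρ ∈ R). Then K̂ is generated over ℚ by the elements ∑_{ρ∈R} ρ(x) as x ranges over K. -/
open scoped Pointwise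

set_option maxHeartbeats 1000000 in
set_option synthInstance.maxHeartbeats 400000 in
/-- In the reflex-field setting (CM-field `K ⊆ ℂ` with normal closure
`L`, `H = Gal(L/K)`, CM-type `S` with stabilizer `Hhat` and reflex field `K̂ = L^Hhat`),
if `R ⊆ S` is a set of representatives for the left cosets of `H` contained in `S`,
then `K̂` is generated over `ℚ` by the sums `∑_{ρ ∈ R} ρ(x)` for `x ∈ K`. -/
theorem reflex_field_eq_adjoin_type_traces
    (K L : IntermediateField ℚ ℂ) [NumberField K] (g : ℕ)
    (hdeg : Module.finrank ℚ K = 2 * g)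
    (hCM : IsCMField K)
    (hKL : K ≤ L) [IsGalois ℚ L]
    (hmin : ∀ M : IntermediateField ℚ ℂ, K ≤ M → IsGalois ℚ M → L ≤ M)
    (c : L ≃ₐ[ℚ] L) (hc : ∀ x : L, (c x : ℂ) = starRingEnd ℂ (x : ℂ))
    (H : Set (L ≃ₐ[ℚ] L)) (hH : H = {γ | ∀ x : L, (x : ℂ) ∈ K → γ x = x})
    (S : Set (L ≃ₐ[ℚ] L)) (hSH : S * H = S)
    (hcover : ∀ γ : L ≃ₐ[ℚ] L, γ ∈ S ∨ γ ∈ (fun s => c * s) '' S)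
    (hdisj : Disjoint S ((fun s => c * s) '' S))
    (Hhat : Subgroup (L ≃ₐ[ℚ] L)) (hHhat : ∀ γ, γ ∈ Hhat ↔ (fun s => γ * s) '' S = S)
    (R : Finset (L ≃ₐ[ℚ] L)) (hRS : ↑R ⊆ S)
    (hRcover : ∀ s ∈ S, ∃ ρ ∈ R, ρ⁻¹ * s ∈ H)
    (hRsep : ∀ ρ ∈ R, ∀ ρ' ∈ R, ρ⁻¹ * ρ' ∈ H → ρ = ρ') :
    IntermediateField.fixedField Hhat =
      IntermediateField.adjoin ℚ {y : L | ∃ x : L, (x : ℂ) ∈ K ∧ y = ∑ ρ ∈ R, ρ x} := by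
  classical
  -- finite dimensionality of L over ℚ
  haveI finL : FiniteDimensional ℚ L := by
    have splits : ∀ x : K, ((minpoly ℚ x).map (algebraMap ℚ ℂ)).Splits :=
      fun x => IsAlgClosed.splits _
    have hNC : IsNormalClosure ℚ K (IntermediateField.normalClosure ℚ K ℂ) :=
      Algebra.IsAlgebraic.isNormalClosure_normalClosure splits
    have hnormal : Normal ℚ (IntermediateField.normalClosure ℚ K ℂ) := hNC.normal
    have hgal : IsGalois ℚ (IntermediateField.normalClosure ℚ K ℂ) := { }
    have hle : L ≤ IntermediateField.normalClosure ℚ K ℂ :=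
      hmin _ (IntermediateField.le_normalClosure K) hgal
    have hfd : FiniteDimensional ℚ (IntermediateField.normalClosure ℚ K ℂ) := inferInstance
    exact FiniteDimensional.of_injective (IntermediateField.inclusion hle).toLinearMap
      (IntermediateField.inclusion_injective hle)
  -- membership in H
  have hmemH : ∀ σ : L ≃ₐ[ℚ] L, σ ∈ H ↔ ∀ x : L, (x : ℂ) ∈ K → σ x = x := by
    intro σ; rw [hH]; exact Iff.rfl
  have hinvmul : ∀ σ τ : L ≃ₐ[ℚ] L, σ⁻¹ * τ ∈ H ↔ ∀ x : L, (x : ℂ) ∈ K → τ x = σ x := by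
    intro σ τ
    rw [hmemH]
    constructor
    · intro h x hx
      have h1 := h x hx
      rw [AlgEquiv.mul_apply] at h1
      have h2 := congrArg σ h1
      rwa [show σ (σ⁻¹ (τ x)) = τ x from σ.apply_symm_apply (τ x)] at h2
    · intro h x hx
      rw [AlgEquiv.mul_apply, h x hx]
      exact σ.symm_apply_apply x
  -- the inclusion of K into L and the character attached to an automorphism
  set ι : K →ₐ[ℚ] L := IntermediateField.inclusion hKL with hι
  have hιmem : ∀ x : K, ((ι x : L) : ℂ) ∈ K := fun x => x.2
  have hιsurj : ∀ (x : L), (hx : (x : ℂ) ∈ K) → ι ⟨(x : ℂ), hx⟩ = x := by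
    intro x hx; exact Subtype.ext rfl
  set χ : (L ≃ₐ[ℚ] L) → (K →* L) :=
    fun σ => ((σ.toAlgHom.comp ι).toRingHom : K →+* L).toMonoidHom with hχ
  have hχap : ∀ (σ : L ≃ₐ[ℚ] L) (x : K), χ σ x = σ (ι x) := fun _ _ => rfl
  have hχeq : ∀ σ τ : L ≃ₐ[ℚ] L, χ σ = χ τ ↔ ∀ x : L, (x : ℂ) ∈ K → σ x = τ x := by
    intro σ τ
    constructor
    · intro h x hx
      have h1 := DFunLike.congr_fun h ⟨(x : ℂ), hx⟩
      rwa [hχap, hχap, hιsurj x hx] at h1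
    · intro h
      ext x
      exact congrArg Subtype.val (h (ι x) (hιmem x))
  -- separation of elements of R by their action on K
  have hχinjR : ∀ ρ₁ ∈ R, ∀ ρ₂ ∈ R, (∀ x : L, (x : ℂ) ∈ K → ρ₁ x = ρ₂ x) → ρ₁ = ρ₂ := by
    intro ρ₁ h₁ ρ₂ h₂ h
    exact hRsep ρ₁ h₁ ρ₂ h₂ ((hinvmul ρ₁ ρ₂).mpr fun x hx => (h x hx).symm)
  set Mset : Set L := {y : L | ∃ x : L, (x : ℂ) ∈ K ∧ y = ∑ ρ ∈ R, ρ x} with hMset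
  apply le_antisymm
  · -- fixedField Hhat ≤ adjoin ℚ Mset
    have h2 : IntermediateField.fixingSubgroup (IntermediateField.adjoin ℚ Mset) ≤ Hhat := by
      intro γ hγ
      have hfix : ∀ x : L, (x : ℂ) ∈ K → γ (∑ ρ ∈ R, ρ x) = ∑ ρ ∈ R, ρ x := by
        intro x hx
        have hmem : (∑ ρ ∈ R, ρ x) ∈ IntermediateField.adjoin ℚ Mset :=
          IntermediateField.subset_adjoin ℚ _ ⟨x, hx, rfl⟩
        exact hγ ⟨_, hmem⟩
      set T : Finset (K →* L) := R.image (fun ρ => χ (γ * ρ)) with hT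
      set T' : Finset (K →* L) := R.image χ with hT'
      have hinjT : ∀ a ∈ R, ∀ b ∈ R, χ (γ * a) = χ (γ * b) → a = b := by
        intro ρ₁ h₁ ρ₂ h₂ h
        refine hχinjR ρ₁ h₁ ρ₂ h₂ fun x hx => ?_
        have h3 := (hχeq _ _).mp h x hx
        rw [AlgEquiv.mul_apply, AlgEquiv.mul_apply] at h3
        exact γ.injective h3
      have hinjT' : ∀ a ∈ R, ∀ b ∈ R, χ a = χ b → a = b := fun ρ₁ h₁ ρ₂ h₂ h =>
        hχinjR ρ₁ h₁ ρ₂ h₂ ((hχeq _ _).mp h)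
      have hsum : ∀ x : K, ∑ f ∈ T, f x = ∑ f ∈ T', f x := by
        intro x
        rw [hT, hT', Finset.sum_image (fun a ha b hb hab => hinjT a ha b hb hab),
          Finset.sum_image (fun a ha b hb hab => hinjT' a ha b hb hab)]
        have h1 : ∑ ρ ∈ R, γ (ρ (ι x)) = ∑ ρ ∈ R, ρ (ι x) := by
          rw [← map_sum]; exact hfix (ι x) (hιmem x)
        simpa only [hχap, AlgEquiv.mul_apply] using h1
      -- linear independence of characters gives T = T'
      have hTT' : T = T' := by
        have li := linearIndependent_monoidHom K L
        rw [linearIndependent_iff'] at li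
        have h0 : ∑ f ∈ T ∪ T',
            ((if f ∈ T then (1 : L) else 0) - if f ∈ T' then 1 else 0) • (⇑f : K → L) = 0 := by
          funext x
          rw [Finset.sum_apply]
          have e1 : (T ∪ T').filter (· ∈ T) = T := by
            ext f; simp only [Finset.mem_filter, Finset.mem_union]; tauto
          have e2 : (T ∪ T').filter (· ∈ T') = T' := by
            ext f; simp only [Finset.mem_filter, Finset.mem_union]; tauto
          have : ∑ f ∈ T ∪ T',
              (((if f ∈ T then (1 : L) else 0) - if f ∈ T' then 1 else 0) • (⇑f : K → L)) x
              = (∑ f ∈ T, f x) - ∑ f ∈ T', f x := by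
            simp only [Pi.smul_apply, smul_eq_mul, sub_mul, one_mul, zero_mul, ite_mul,
              Finset.sum_sub_distrib]
            rw [← Finset.sum_filter, ← Finset.sum_filter, e1, e2]
          rw [this, hsum x, sub_self]
          rfl
        have hz := li (T ∪ T') _ h0
        ext f
        constructor
        · intro hf
          by_contra hf'
          have := hz f (Finset.mem_union_left _ hf)
          simp [hf, hf'] at this
        · intro hf
          by_contra hf'
          have := hz f (Finset.mem_union_right _ hf)
          simp [hf, hf'] at this
      -- translate T = T' into coset information
      have hmemT : ∀ ρ ∈ R, ∃ ρ' ∈ R, ∀ x : L, (x : ℂ) ∈ K → γ (ρ x) = ρ' x := by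
        intro ρ hρ
        have h3 : χ (γ * ρ) ∈ T' := hTT' ▸ Finset.mem_image_of_mem _ hρ
        obtain ⟨ρ', hρ', he⟩ := Finset.mem_image.mp h3
        refine ⟨ρ', hρ', fun x hx => ?_⟩
        have h4 := (hχeq _ _).mp he x hx
        rw [AlgEquiv.mul_apply] at h4
        exact h4.symm
      have hmemT' : ∀ ρ' ∈ R, ∃ ρ ∈ R, ∀ x : L, (x : ℂ) ∈ K → γ (ρ x) = ρ' x := by
        intro ρ' hρ'
        have h3 : χ ρ' ∈ T := hTT'.symm ▸ Finset.mem_image_of_mem _ hρ'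
        obtain ⟨ρ, hρ, he⟩ := Finset.mem_image.mp h3
        refine ⟨ρ, hρ, fun x hx => ?_⟩
        have h4 := (hχeq _ _).mp he x hx
        rw [AlgEquiv.mul_apply] at h4
        exact h4
      -- conclude γ ∈ Hhat
      rw [hHhat]
      apply Set.Subset.antisymm
      · rintro _ ⟨s, hs, rfl⟩
        obtain ⟨ρ, hρR, hρH⟩ := hRcover s hs
        obtain ⟨ρ', hρ'R, hagree⟩ := hmemT ρ hρR
        have hsx : ∀ x : L, (x : ℂ) ∈ K → s x = ρ x := (hinvmul ρ s).mp hρH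
        have hmem : ρ'⁻¹ * (γ * s) ∈ H := (hinvmul ρ' (γ * s)).mpr fun x hx => by
          rw [AlgEquiv.mul_apply, hsx x hx, hagree x hx]
        show γ * s ∈ S
        rw [show γ * s = ρ' * (ρ'⁻¹ * (γ * s)) by group, ← hSH]
        exact Set.mul_mem_mul (hRS hρ'R) hmem
      · intro s hs
        obtain ⟨ρ', hρ'R, hρ'H⟩ := hRcover s hs
        obtain ⟨ρ, hρR, hagree⟩ := hmemT' ρ' hρ'R
        have hsx : ∀ x : L, (x : ℂ) ∈ K → s x = ρ' x := (hinvmul ρ' s).mp hρ'H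
        have hmem : ρ⁻¹ * (γ⁻¹ * s) ∈ H := (hinvmul ρ (γ⁻¹ * s)).mpr fun x hx => by
          rw [AlgEquiv.mul_apply, hsx x hx, ← hagree x hx]
          exact γ.symm_apply_apply _
        refine ⟨γ⁻¹ * s, ?_, by group⟩
        rw [show γ⁻¹ * s = ρ * (ρ⁻¹ * (γ⁻¹ * s)) by group, ← hSH]
        exact Set.mul_mem_mul (hRS hρR) hmem
    have h3 := IsGalois.fixedField_fixingSubgroup (IntermediateField.adjoin ℚ Mset)
    rw [← h3]
    intro x hx
    exact fun gg => hx ⟨gg.1, h2 gg.2⟩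
  · -- adjoin ℚ Mset ≤ fixedField Hhat
    rw [IntermediateField.adjoin_le_iff]
    rintro y ⟨x, hx, rfl⟩
    intro γhat
    obtain ⟨γ, hγ⟩ := γhat
    show γ • (∑ ρ ∈ R, ρ x) = ∑ ρ ∈ R, ρ x
    rw [AlgEquiv.smul_def, map_sum]
    have hγS : (fun s => γ * s) '' S = S := (hHhat γ).mp hγ
    have hγinv : (fun s => γ⁻¹ * s) '' S = S := (hHhat γ⁻¹).mp (inv_mem hγ)
    have hstep : ∀ ρ ∈ R, ∃ ρ' ∈ R, ∀ z : L, (z : ℂ) ∈ K → γ (ρ z) = ρ' z := by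
      intro ρ hρ
      have hγρS : γ * ρ ∈ S := by rw [← hγS]; exact ⟨ρ, hRS hρ, rfl⟩
      obtain ⟨ρ', hρ', hH'⟩ := hRcover _ hγρS
      refine ⟨ρ', hρ', fun z hz => ?_⟩
      have h4 := (hinvmul ρ' (γ * ρ)).mp hH' z hz
      rwa [AlgEquiv.mul_apply] at h4
    choose e he1 he2 using hstep
    refine Finset.sum_bij (fun ρ hρ => e ρ hρ) (fun ρ hρ => he1 ρ hρ) ?_ ?_ ?_
    · intro a₁ ha₁ a₂ ha₂ h
      have h' : e a₁ ha₁ = e a₂ ha₂ := h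
      refine hχinjR a₁ ha₁ a₂ ha₂ fun z hz => γ.injective ?_
      rw [he2 a₁ ha₁ z hz, he2 a₂ ha₂ z hz, h']
    · intro b hbR
      have hb : γ⁻¹ * b ∈ S := by rw [← hγinv]; exact ⟨b, hRS hbR, rfl⟩
      obtain ⟨a, haR, haH⟩ := hRcover _ hb
      have hag := (hinvmul a (γ⁻¹ * b)).mp haH
      refine ⟨a, haR, ?_⟩
      apply hχinjR (e a haR) (he1 a haR) b hbR
      intro z hz
      have h1 : γ (a z) = e a haR z := he2 a haR z hz
      have h2 : γ⁻¹ (b z) = a z := by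
        have := hag z hz; rwa [AlgEquiv.mul_apply] at this
      rw [← h1, ← h2]
      exact γ.apply_symm_apply _
    · intro ρ hρ
      exact he2 ρ hρ x hx
end

section
/- Let K ⊆ ℂ be a CM-field of degree 2g, let L ⊆ ℂ be the normal closure of K over ℚ, let G = Gal(L/ℚ), let c ∈ G be the restriction of complex conjugation to L, and let H = {γ ∈ G : γ(x) = x for all x ∈ K}. Let S ⊆ G satisfy S·H = S and let G be the disjoint union of S and cS. Define Ĥ = {γ ∈ G : γS = S} and K̂ = L^Ĥ. Let R ⊆ S be a set of representatives for the left cosets of H contained in S. Then for every x ∈ K, the type norm N_Φ(x) = ∏_{ρ∈R} ρ(x) lies in the reflex field K̂, i.e., it is fixed by every element of Ĥ. -/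
open scoped Pointwise

private lemma typeNorm_grp_aux {G : Type*} [Group G] (a b γ ρ : G) :
    (a⁻¹ * (γ * ρ))⁻¹ * (b⁻¹ * (γ⁻¹ * a))⁻¹ = ρ⁻¹ * b := by
  group

private lemma typeNorm_grp_aux' {G : Type*} [Group G] (a b γ ρ : G) :
    (a⁻¹ * (γ⁻¹ * ρ))⁻¹ * (b⁻¹ * (γ * a))⁻¹ = ρ⁻¹ * b := by
  group

/-- In the reflex-field setting (CM-field `K ⊆ ℂ` with normal closure
`L`, `H = Gal(L/K)`, CM-type `S` with stabilizer `Ĥ = {γ : γS = S}`), if `R ⊆ S` is a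
set of representatives for the left cosets of `H` contained in `S`, then for every
`x ∈ K` the type norm `N_Φ(x) = ∏_{ρ ∈ R} ρ(x)` is fixed by every element of `Ĥ`,
i.e. it lies in the reflex field `K̂ = L^Ĥ`. -/
theorem typeNorm_mem_reflex_field
    (K L : IntermediateField ℚ ℂ) [NumberField K] (g : ℕ)
    (hdeg : Module.finrank ℚ K = 2 * g)
    (hCM : IsCMField K)
    (hKL : K ≤ L) [IsGalois ℚ L]
    (hmin : ∀ M : IntermediateField ℚ ℂ, K ≤ M → IsGalois ℚ M → L ≤ M)
    (c : L ≃ₐ[ℚ] L) (hc : ∀ x : L, (c x : ℂ) = starRingEnd ℂ (x : ℂ))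
    (H : Set (L ≃ₐ[ℚ] L)) (hH : H = {γ | ∀ x : L, (x : ℂ) ∈ K → γ x = x})
    (S : Set (L ≃ₐ[ℚ] L)) (hSH : S * H = S)
    (hcover : ∀ γ : L ≃ₐ[ℚ] L, γ ∈ S ∨ γ ∈ (fun s => c * s) '' S)
    (hdisj : Disjoint S ((fun s => c * s) '' S))
    (R : Finset (L ≃ₐ[ℚ] L)) (hRS : ↑R ⊆ S)
    (hRcover : ∀ s ∈ S, ∃ ρ ∈ R, ρ⁻¹ * s ∈ H)
    (hRsep : ∀ ρ ∈ R, ∀ ρ' ∈ R, ρ⁻¹ * ρ' ∈ H → ρ = ρ')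
    (x : L) (hx : (x : ℂ) ∈ K) :
    ∀ γ : L ≃ₐ[ℚ] L, (fun s => γ * s) '' S = S →
      γ (∏ ρ ∈ R, ρ x) = ∏ ρ ∈ R, ρ x := by
  intro γ hγS
  have hSγ : ∀ s ∈ S, γ * s ∈ S := by
    intro s hs; rw [← hγS]; exact ⟨s, hs, rfl⟩
  have hSγ' : ∀ s ∈ S, γ⁻¹ * s ∈ S := by
    intro s hs
    rw [← hγS] at hs
    obtain ⟨t, ht, rfl⟩ := hs
    simpa using ht
  have hHx : ∀ h ∈ H, h x = x := by
    rw [hH]; intro h hh; exact hh x hx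
  have Hinv : ∀ h ∈ H, h⁻¹ ∈ H := by
    rw [hH]
    intro h hh y hy
    have h1 := hh y hy
    calc h⁻¹ y = h⁻¹ (h y) := by rw [h1]
    _ = y := h.symm_apply_apply y
  have Hmul : ∀ h₁ ∈ H, ∀ h₂ ∈ H, h₁ * h₂ ∈ H := by
    rw [hH]
    intro h₁ h₁h h₂ h₂h y hy
    have h2 : h₂ y = y := h₂h y hy
    show h₁ (h₂ y) = y
    rw [h2]; exact h₁h y hy
  have key : ∀ ρ : L ≃ₐ[ℚ] L, ∃ ρ', ρ ∈ R → ρ' ∈ R ∧ ρ'⁻¹ * (γ * ρ) ∈ H := by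
    intro ρ
    by_cases h : ρ ∈ R
    · obtain ⟨ρ', h1, h2⟩ := hRcover _ (hSγ ρ (hRS h))
      exact ⟨ρ', fun _ => ⟨h1, h2⟩⟩
    · exact ⟨ρ, fun h' => absurd h' h⟩
  choose f hf using key
  have key' : ∀ ρ : L ≃ₐ[ℚ] L, ∃ ρ', ρ ∈ R → ρ' ∈ R ∧ ρ'⁻¹ * (γ⁻¹ * ρ) ∈ H := by
    intro ρ
    by_cases h : ρ ∈ R
    · obtain ⟨ρ', h1, h2⟩ := hRcover _ (hSγ' ρ (hRS h))
      exact ⟨ρ', fun _ => ⟨h1, h2⟩⟩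
    · exact ⟨ρ, fun h' => absurd h' h⟩
  choose j hj using key'
  have linv : ∀ ρ ∈ R, j (f ρ) = ρ := by
    intro ρ hρ
    obtain ⟨hfR, hfH⟩ := hf ρ hρ
    obtain ⟨hjR, hjH⟩ := hj (f ρ) hfR
    refine (hRsep ρ hρ (j (f ρ)) hjR ?_).symm
    have hm := Hmul _ (Hinv _ hfH) _ (Hinv _ hjH)
    rwa [typeNorm_grp_aux] at hm
  have rinv : ∀ ρ ∈ R, f (j ρ) = ρ := by
    intro ρ hρ
    obtain ⟨hjR, hjH⟩ := hj ρ hρ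
    obtain ⟨hfR, hfH⟩ := hf (j ρ) hjR
    refine (hRsep ρ hρ (f (j ρ)) hfR ?_).symm
    have hm := Hmul _ (Hinv _ hjH) _ (Hinv _ hfH)
    rwa [typeNorm_grp_aux'] at hm
  rw [map_prod]
  refine Finset.prod_nbij' f j (fun ρ hρ => (hf ρ hρ).1) (fun ρ hρ => (hj ρ hρ).1)
    linv rinv ?_
  intro ρ hρ
  obtain ⟨hfR, hfH⟩ := hf ρ hρ
  have hfix := hHx _ hfH
  rw [AlgEquiv.mul_apply, AlgEquiv.mul_apply] at hfix
  have h2 := congrArg (f ρ) hfix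
  rwa [show ((f ρ)⁻¹ : _ ≃ₐ[ℚ] _) = (f ρ).symm from rfl, AlgEquiv.apply_symm_apply] at h2
end

section
/- Let K ⊆ ℂ be a CM-field of degree 2g, let L ⊆ ℂ be the normal closure of K over ℚ, let G = Gal(L/ℚ), let c ∈ G be the restriction of complex conjugation to L, and let H = {γ ∈ G : γ(x) = x for all x ∈ K}. Let S ⊆ G satisfy S·H = S and let G be the disjoint union of S and cS. Define Ĥ = {γ ∈ G : γS = S}, K̂ = L^Ĥ, and Ŝ = {σ^{-1} : σ ∈ S}. Then Ŝ·Ĥ = Ŝ (Ŝ is a union of left cosets of Ĥ), G is the disjoint union of Ŝ and cŜ, and the number of distinct left cosets of Ĥ contained in Ŝ equals [K̂ : ℚ]/2. In other words, Ŝ encodes a CM-type Ψ of the reflex field K̂ (the reflex type). -/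
open scoped Pointwise

/-! ### Auxiliary lemmas -/

/-- If `β ∉ F` and `[K:F]=2` then `{1, β}` spans. -/
lemma span_pair_of_not_mem {Kf : Type*} [Field Kf] (F : Subfield Kf)
    (hrk : Module.finrank F Kf = 2) {β : Kf} (hβ : β ∉ F) :
    ∀ x : Kf, ∃ f g : F, x = (f : Kf) + (g : Kf) * β := by
  haveI : FiniteDimensional F Kf := FiniteDimensional.of_finrank_eq_succ hrk
  have hsm : ∀ (u : F) (x : Kf), u • x = (u : Kf) * x := fun u x => rfl
  have li : LinearIndependent F ![(1 : Kf), β] := by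
    rw [LinearIndependent.pair_iff]
    intro s t hst
    by_cases ht : t = 0
    · subst ht
      simp only [hsm, Subfield.coe_zero, zero_mul, add_zero, mul_one] at hst
      exact ⟨by exact_mod_cast hst, rfl⟩
    · exfalso
      apply hβ
      have : β = ((-t⁻¹ * s : F) : Kf) := by
        field_simp
        rw [hsm, hsm, mul_one] at hst
        have : (t : Kf) ≠ 0 := by exact_mod_cast ht
        push_cast
        field_simp
        linear_combination hst
      rw [this]; exact SetLike.coe_mem _
  let B := basisOfLinearIndependentOfCardEqFinrank li (by simp [hrk])
  have hB : ∀ i, B i = ![(1 : Kf), β] i := fun i => by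
    simp [B, coe_basisOfLinearIndependentOfCardEqFinrank]
  intro x
  refine ⟨B.repr x 0, B.repr x 1, ?_⟩
  have := B.sum_repr x
  rw [Fin.sum_univ_two, hB 0, hB 1] at this
  simp only [Matrix.cons_val_zero, Matrix.cons_val_one, Matrix.head_cons] at this
  rw [hsm, hsm, mul_one] at this
  exact this.symm

lemma exists_not_mem_subfield {Kf : Type*} [Field Kf] (F : Subfield Kf)
    (hrk : Module.finrank F Kf = 2) : ∃ β : Kf, β ∉ F := by
  by_contra h
  push_neg at h
  have hsurj : Function.Surjective (algebraMap F Kf) := fun x => ⟨⟨x, h x⟩, rfl⟩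
  have : Module.finrank F Kf = 1 := by
    have e : F ≃ₗ[F] Kf :=
      LinearEquiv.ofBijective (Algebra.linearMap F Kf)
        ⟨(algebraMap F Kf).injective, hsurj⟩
    rw [← e.finrank_eq, Module.finrank_self]
  omega

lemma exists_sqrt_elt {Kf : Type*} [Field Kf] [CharZero Kf] (F : Subfield Kf)
    (hrk : Module.finrank F Kf = 2) :
    ∃ α : Kf, α ∉ F ∧ α * α ∈ F := by
  obtain ⟨β, hβ⟩ := exists_not_mem_subfield F hrk
  obtain ⟨a, b, hab⟩ := span_pair_of_not_mem F hrk hβ (β * β)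
  have h2 : ((2 : F) : Kf) = 2 := by
    rw [show (2:F) = 1+1 by norm_num]; push_cast; ring
  have h2t : 2 * ((2⁻¹ * b : F) : Kf) = (b : Kf) := by
    have h : (2 : F) * (2⁻¹ * b) = b := by field_simp
    calc 2 * ((2⁻¹ * b : F) : Kf) = (((2 : F) * (2⁻¹ * b) : F) : Kf) := by push_cast [h2]; ring
    _ = (b : Kf) := by rw [h]
  refine ⟨β - ((2⁻¹ * b : F) : Kf), ?_, ?_⟩
  · intro hmem
    apply hβ
    have : β = (β - ((2⁻¹ * b : F) : Kf)) + ((2⁻¹ * b : F) : Kf) := by ring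
    rw [this]
    exact F.add_mem hmem (SetLike.coe_mem _)
  · have key : (β - ((2⁻¹ * b : F) : Kf)) * (β - ((2⁻¹ * b : F) : Kf))
        = ((a + (2⁻¹ * b) * (2⁻¹ * b) : F) : Kf) := by
      have expand : (β - ((2⁻¹ * b : F) : Kf)) * (β - ((2⁻¹ * b : F) : Kf))
          = β * β - (2 * ((2⁻¹ * b : F) : Kf)) * β
            + ((2⁻¹ * b : F) : Kf) * ((2⁻¹ * b : F) : Kf) := by ring
      rw [expand, h2t, hab]
      push_cast
      ring
    rw [key]
    exact SetLike.coe_mem _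

/-- The intrinsic complex conjugation of a CM field: a map `χ` such that every complex
embedding intertwines it with complex conjugation. -/
lemma exists_chi (Kf : Type*) [Field Kf] [CharZero Kf] (hCM : IsCMField Kf) :
    ∃ χ : Kf → Kf, ∀ (ψ : Kf →+* ℂ) (x : Kf), (starRingEnd ℂ) (ψ x) = ψ (χ x) := by
  obtain ⟨htc, F, hF, hrk⟩ := hCM
  obtain ⟨α, hα, hα2⟩ := exists_sqrt_elt F hrk
  have dec := span_pair_of_not_mem F hrk hα
  choose f g hfg using dec
  refine ⟨fun x => (f x : Kf) - (g x : Kf) * α, fun ψ x => ?_⟩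
  have hre : ∀ u : F, (ψ (u : Kf)).im = 0 := fun u => hF (ψ.comp F.subtype) u
  have him : (ψ α).im ≠ 0 := by
    intro h0
    obtain ⟨y, hy⟩ := htc ψ
    apply hy
    rw [hfg y, map_add, map_mul]
    rw [Complex.add_im, Complex.mul_im, hre, hre, h0]
    ring
  have hsq : ((ψ α) * (ψ α)).im = 0 := by
    rw [← map_mul]
    have : α * α = ((⟨α * α, hα2⟩ : F) : Kf) := rfl
    rw [this]
    exact hre _
  have hre0 : (ψ α).re = 0 := by
    rw [Complex.mul_im] at hsq
    have : (ψ α).re * (ψ α).im = 0 := by linarith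
    rcases mul_eq_zero.mp this with h | h
    · exact h
    · exact absurd h him
  have hconjα : (starRingEnd ℂ) (ψ α) = -ψ α := by
    apply Complex.ext <;> simp [hre0]
  have hconjre : ∀ u : F, (starRingEnd ℂ) (ψ (u : Kf)) = ψ (u : Kf) := fun u =>
    Complex.conj_eq_iff_im.mpr (hre u)
  calc (starRingEnd ℂ) (ψ x) = (starRingEnd ℂ) (ψ ((f x : Kf) + (g x : Kf) * α)) := by
        rw [← hfg x]
  _ = ψ (f x : Kf) + ψ (g x : Kf) * (- ψ α) := by
        rw [map_add, map_mul, map_add, map_mul, hconjα, hconjre, hconjre]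
  _ = ψ ((f x : Kf) - (g x : Kf) * α) := by
        rw [map_sub, map_mul]; ring

open IntermediateField in
/-- The intermediate field of elements on which every automorphism commutes with `c`. -/
noncomputable def commField (L : IntermediateField ℚ ℂ) (c : L ≃ₐ[ℚ] L) :
    IntermediateField ℚ L where
  carrier := {x | ∀ σ : L ≃ₐ[ℚ] L, σ (c x) = c (σ x)}
  mul_mem' := fun {a b} ha hb σ => by simp only [map_mul, ha σ, hb σ]
  one_mem' := fun σ => by rw [map_one, map_one, map_one]
  add_mem' := fun {a b} ha hb σ => by simp only [map_add, ha σ, hb σ]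
  zero_mem' := fun σ => by rw [map_zero, map_zero, map_zero]
  algebraMap_mem' := fun r σ => by rw [AlgEquiv.commutes, AlgEquiv.commutes, AlgEquiv.commutes]
  inv_mem' := fun x hx σ => by simp only [map_inv₀, hx σ]

lemma mem_commField {L : IntermediateField ℚ ℂ} {c : L ≃ₐ[ℚ] L} {x : L} :
    x ∈ commField L c ↔ ∀ σ : L ≃ₐ[ℚ] L, σ (c x) = c (σ x) := Iff.rfl

lemma commField_normal (L : IntermediateField ℚ ℂ) [IsGalois ℚ L] (c : L ≃ₐ[ℚ] L) :
    Normal ℚ (↥(commField L c) : Type _) := by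
  refine (@IntermediateField.normal_iff_forall_map_le' ℚ ↥L _ _ _ _ (commField L c)).mpr ?_
  rintro σ x ⟨y, hy, rfl⟩
  intro τ
  show τ (c (σ y)) = c (τ (σ y))
  have h1 : c (σ y) = σ (c y) := (hy σ).symm
  rw [h1, ← AlgEquiv.mul_apply, hy (τ * σ), AlgEquiv.mul_apply]

lemma claimA {K L : IntermediateField ℚ ℂ} (hCM : IsCMField K) (hKL : K ≤ L)
    (c : L ≃ₐ[ℚ] L) (hc : ∀ x : L, (c x : ℂ) = starRingEnd ℂ (x : ℂ)) :
    ∀ (σ : L ≃ₐ[ℚ] L) (x : L), (x : ℂ) ∈ K → σ (c x) = c (σ x) := by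
  obtain ⟨χ, hχ⟩ := exists_chi K hCM
  intro σ x hx
  set k : K := ⟨(x : ℂ), hx⟩ with hk
  set ψ : (K : Type _) →+* ℂ :=
    (algebraMap (L : Type _) ℂ).comp
      ((σ : (L : Type _) →+* (L : Type _)).comp (IntermediateField.inclusion hKL).toRingHom)
    with hψdef
  have hψ : ∀ u : K, ψ u = ((σ (IntermediateField.inclusion hKL u) : ℂ)) := fun u => rfl
  have hι : ∀ u : K, (algebraMap (K : Type _) ℂ) u = (u : ℂ) := fun u => rfl
  have hcx : c x = IntermediateField.inclusion hKL (χ k) := by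
    apply Subtype.ext
    have h1 := hχ (algebraMap (K : Type _) ℂ) k
    rw [hι, hι] at h1
    show (c x : ℂ) = (χ k : ℂ)
    rw [hc x]
    exact h1
  have hxk : IntermediateField.inclusion hKL k = x := Subtype.ext rfl
  apply Subtype.ext
  rw [hcx]
  calc ((σ (IntermediateField.inclusion hKL (χ k)) : ℂ)) = ψ (χ k) := (hψ _).symm
  _ = starRingEnd ℂ (ψ k) := (hχ ψ k).symm
  _ = starRingEnd ℂ ((σ x : ℂ)) := by rw [hψ, hxk]
  _ = ((c (σ x) : ℂ)) := (hc (σ x)).symm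

open IntermediateField in
/-- Complex conjugation is central in the Galois group of the normal closure of a CM field. -/
lemma central {K L : IntermediateField ℚ ℂ} (hCM : IsCMField K) (hKL : K ≤ L) [IsGalois ℚ L]
    (hmin : ∀ M : IntermediateField ℚ ℂ, K ≤ M → IsGalois ℚ M → L ≤ M)
    (c : L ≃ₐ[ℚ] L) (hc : ∀ x : L, (c x : ℂ) = starRingEnd ℂ (x : ℂ)) :
    ∀ (σ : L ≃ₐ[ℚ] L) (x : L), σ (c x) = c (σ x) := by
  haveI hnor : Normal ℚ (↥(commField L c) : Type _) := commField_normal L c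
  haveI : IsGalois ℚ (↥(commField L c) : Type _) := ⟨⟩
  haveI : IsGalois ℚ (↥(lift (commField L c)) : Type _) :=
    (AlgEquiv.transfer_galois (liftAlgEquiv (commField L c))).mp
      (by convert this; exacts [Iff.rfl, rfl, Subsingleton.elim _ _])
  have hKM : K ≤ lift (commField L c) := by
    intro z hz
    have hzL : z ∈ L := hKL hz
    exact (mem_lift (⟨z, hzL⟩ : L)).mpr
      (mem_commField.mpr (fun σ => claimA hCM hKL c hc σ ⟨z, hzL⟩ hz))
  have hLM := hmin _ hKM inferInstance
  intro σ x
  exact mem_commField.mp ((mem_lift x).mp (hLM x.2)) σ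

set_option maxHeartbeats 1000000 in
set_option synthInstance.maxHeartbeats 200000 in
/-- In the reflex-field setting, `Ŝ = S⁻¹` is a union of left cosets
of `Ĥ`, `G` is the disjoint union of `Ŝ` and `cŜ`, and the number of left cosets of
`Ĥ` contained in `Ŝ` equals `[K̂ : ℚ]/2`; that is, `Ŝ` encodes a CM-type of the reflex
field `K̂ = L^Ĥ` (the reflex type). -/
theorem reflex_type_is_CMtype
    (K L : IntermediateField ℚ ℂ) [NumberField K] (g : ℕ)
    (hdeg : Module.finrank ℚ K = 2 * g)
    (hCM : IsCMField K)
    (hKL : K ≤ L) [IsGalois ℚ L]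
    (hmin : ∀ M : IntermediateField ℚ ℂ, K ≤ M → IsGalois ℚ M → L ≤ M)
    (c : L ≃ₐ[ℚ] L) (hc : ∀ x : L, (c x : ℂ) = starRingEnd ℂ (x : ℂ))
    (H : Set (L ≃ₐ[ℚ] L)) (hH : H = {γ | ∀ x : L, (x : ℂ) ∈ K → γ x = x})
    (S : Set (L ≃ₐ[ℚ] L)) (hSH : S * H = S)
    (hcover : ∀ γ : L ≃ₐ[ℚ] L, γ ∈ S ∨ γ ∈ (fun s => c * s) '' S)
    (hdisj : Disjoint S ((fun s => c * s) '' S))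
    (Hhat : Subgroup (L ≃ₐ[ℚ] L)) (hHhat : ∀ γ, γ ∈ Hhat ↔ (fun s => γ * s) '' S = S) :
    S⁻¹ * (Hhat : Set (L ≃ₐ[ℚ] L)) = S⁻¹ ∧
    (∀ γ : L ≃ₐ[ℚ] L, γ ∈ S⁻¹ ∨ γ ∈ (fun s => c * s) '' S⁻¹) ∧
    Disjoint S⁻¹ ((fun s => c * s) '' S⁻¹) ∧
    2 * Nat.card {T : Set (L ≃ₐ[ℚ] L) //
        ∃ ρ ∈ S⁻¹, T = (fun h => ρ * h) '' (Hhat : Set (L ≃ₐ[ℚ] L))} =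
      Module.finrank ℚ (IntermediateField.fixedField Hhat) := by
  classical
  -- centrality of complex conjugation
  have hcomm : ∀ (σ : L ≃ₐ[ℚ] L) (x : L), σ (c x) = c (σ x) := central hCM hKL hmin c hc
  have hccomm : ∀ σ : L ≃ₐ[ℚ] L, c * σ = σ * c := fun σ =>
    AlgEquiv.ext fun x => (hcomm σ x).symm
  have hc2 : c * c = 1 := by
    apply AlgEquiv.ext; intro x; apply Subtype.ext
    show ((c (c x)) : ℂ) = (x : ℂ)
    rw [hc, hc, Complex.conj_conj]
  have hcinv : c⁻¹ = c := inv_eq_of_mul_eq_one_right hc2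
  -- part 1
  have part1 : S⁻¹ * (Hhat : Set (L ≃ₐ[ℚ] L)) = S⁻¹ := by
    ext γ
    rw [Set.mem_mul]
    constructor
    · rintro ⟨a, ha, h, hh, rfl⟩
      have ha' : a⁻¹ ∈ S := Set.mem_inv.mp ha
      have hh' : h⁻¹ ∈ Hhat := Hhat.inv_mem (SetLike.mem_coe.mp hh)
      have him : (fun s => h⁻¹ * s) '' S = S := (hHhat h⁻¹).mp hh'
      show a * h ∈ S⁻¹
      rw [Set.mem_inv, mul_inv_rev, ← him]
      exact ⟨a⁻¹, ha', rfl⟩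
    · intro hγ
      exact ⟨γ, hγ, 1, SetLike.mem_coe.mpr Hhat.one_mem, mul_one γ⟩
  -- part 2
  have part2 : ∀ γ : L ≃ₐ[ℚ] L, γ ∈ S⁻¹ ∨ γ ∈ (fun s => c * s) '' S⁻¹ := by
    intro γ
    rcases hcover γ⁻¹ with h | ⟨s, hs, hsc⟩
    · left; exact Set.mem_inv.mpr h
    · right
      refine ⟨s⁻¹, Set.inv_mem_inv.mpr hs, ?_⟩
      show c * s⁻¹ = γ
      have hsc' : c * s = γ⁻¹ := hsc
      have hγ : γ = s⁻¹ * c⁻¹ := by rw [← mul_inv_rev, hsc', inv_inv]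
      rw [hγ, hcinv, hccomm]
  -- part 3
  have part3 : Disjoint S⁻¹ ((fun s => c * s) '' S⁻¹) := by
    rw [Set.disjoint_left]
    rintro γ hγ ⟨s, hs, rfl⟩
    have h1 : (c * s)⁻¹ ∈ S := Set.mem_inv.mp hγ
    have h2 : (c * s)⁻¹ = c * s⁻¹ := by rw [mul_inv_rev, hcinv, ← hccomm]
    have h3 : s⁻¹ ∈ S := Set.mem_inv.mp hs
    rw [h2] at h1
    exact Set.disjoint_left.mp hdisj h1 ⟨s⁻¹, h3, rfl⟩
  refine ⟨part1, part2, part3, ?_⟩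
  -- part 4 : the counting statement
  -- first, `L` is finite-dimensional over `ℚ`
  haveI : FiniteDimensional ℚ (K : Type _) := NumberField.to_finiteDimensional
  haveI : IsNormalClosure ℚ (K : Type _) (↥(IntermediateField.normalClosure ℚ (K : Type _) ℂ) : Type _) :=
    Algebra.IsAlgebraic.isNormalClosure_normalClosure
      (fun x => IsAlgClosed.splits _)
  haveI : Normal ℚ (↥(IntermediateField.normalClosure ℚ (K : Type _) ℂ) : Type _) :=
    IsNormalClosure.normal (F := ℚ) (K := (K : Type _))
      (L := (↥(IntermediateField.normalClosure ℚ (K : Type _) ℂ) : Type _))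
  haveI : IsGalois ℚ (↥(IntermediateField.normalClosure ℚ (K : Type _) ℂ) : Type _) := ⟨⟩
  have hLN : L ≤ IntermediateField.normalClosure ℚ (K : Type _) ℂ :=
    hmin _ (IntermediateField.le_normalClosure K) inferInstance
  haveI : FiniteDimensional ℚ (L : Type _) :=
    FiniteDimensional.of_injective (IntermediateField.inclusion hLN).toLinearMap
      ((IntermediateField.inclusion hLN).toRingHom.injective)
  -- the degree of the fixed field equals the index of `Hhat`
  have hfr : Module.finrank ℚ (↥(IntermediateField.fixedField Hhat) : Type _) = Hhat.index := by
    have h1 : Module.finrank (↥(IntermediateField.fixedField Hhat)) (L : Type _)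
        = Nat.card Hhat := by
      rw [IntermediateField.finrank_fixedField_eq_card, Nat.card_eq_fintype_card]
    have h2 : Module.finrank ℚ (↥(IntermediateField.fixedField Hhat))
        * Module.finrank (↥(IntermediateField.fixedField Hhat)) (L : Type _)
        = Module.finrank ℚ (L : Type _) :=
      Module.finrank_mul_finrank ℚ _ _
    have h3 : Nat.card (L ≃ₐ[ℚ] L) = Module.finrank ℚ (L : Type _) := by
      rw [IsGalois.card_aut_eq_finrank]
    have h4 := Subgroup.index_mul_card Hhat
    have hpos : 0 < Nat.card Hhat := Nat.card_pos
    have key : Module.finrank ℚ (↥(IntermediateField.fixedField Hhat) : Type _) * Nat.card Hhat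
        = Hhat.index * Nat.card Hhat := by
      rw [h4, h3, ← h2, h1]
    exact Nat.eq_of_mul_eq_mul_right hpos key
  have hlift : Module.finrank ℚ
      (↥(IntermediateField.lift (IntermediateField.fixedField Hhat)) : Type _)
      = Module.finrank ℚ (↥(IntermediateField.fixedField Hhat) : Type _) :=
    (LinearEquiv.finrank_eq
      (IntermediateField.liftAlgEquiv (IntermediateField.fixedField Hhat)).toLinearEquiv).symm
  rw [hfr]
  -- identify the coset sets with elements of the quotient
  let mk : (L ≃ₐ[ℚ] L) → (L ≃ₐ[ℚ] L) ⧸ Hhat := QuotientGroup.mk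
  have key : ∀ ρ : L ≃ₐ[ℚ] L, mk ⁻¹' {mk ρ}
      = (fun h => ρ * h) '' (Hhat : Set (L ≃ₐ[ℚ] L)) := by
    intro ρ; ext x
    simp only [Set.mem_preimage, Set.mem_singleton_iff, Set.mem_image]
    constructor
    · intro h
      have h' : ρ⁻¹ * x ∈ Hhat := QuotientGroup.eq.mp h.symm
      exact ⟨ρ⁻¹ * x, SetLike.mem_coe.mpr h', by group⟩
    · rintro ⟨h, hh, rfl⟩
      exact (QuotientGroup.eq.mpr (by simpa using SetLike.mem_coe.mp hh)).symm
  have hbij : Function.Bijective (fun q : ↥(mk '' S⁻¹) =>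
      (⟨mk ⁻¹' {(q : (L ≃ₐ[ℚ] L) ⧸ Hhat)}, by
        obtain ⟨ρ, hρ, hq⟩ := q.2
        exact ⟨ρ, hρ, by rw [← hq, key]⟩⟩ :
      {T : Set (L ≃ₐ[ℚ] L) //
        ∃ ρ ∈ S⁻¹, T = (fun h => ρ * h) '' (Hhat : Set (L ≃ₐ[ℚ] L))})) := by
    constructor
    · rintro ⟨q1, hq1⟩ ⟨q2, hq2⟩ hpre
      have hpre' : mk ⁻¹' {q1} = mk ⁻¹' {q2} := congrArg Subtype.val hpre
      obtain ⟨ρ, _, hρ⟩ := hq1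
      have hmem : ρ ∈ mk ⁻¹' {q1} := by simp [hρ]
      rw [hpre'] at hmem
      refine Subtype.ext ?_
      show q1 = q2
      rw [← hρ]
      exact hmem
    · rintro ⟨T, ρ, hρ, hT⟩
      refine ⟨⟨mk ρ, ⟨ρ, hρ, rfl⟩⟩, Subtype.ext ?_⟩
      show mk ⁻¹' {mk ρ} = T
      rw [key, hT]
  have hcount : Nat.card {T : Set (L ≃ₐ[ℚ] L) //
        ∃ ρ ∈ S⁻¹, T = (fun h => ρ * h) '' (Hhat : Set (L ≃ₐ[ℚ] L))}
      = Nat.card ↥(mk '' S⁻¹) := (Nat.card_congr (Equiv.ofBijective _ hbij)).symm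
  rw [hcount]
  -- the quotient splits into the image of `S⁻¹` and its translate by `c`
  have hwd : ∀ a b : L ≃ₐ[ℚ] L, Setoid.r (self := QuotientGroup.leftRel Hhat) a b →
      Setoid.r (self := QuotientGroup.leftRel Hhat) (c * a) (c * b) := by
    intro a b hab
    have h1 : a⁻¹ * b ∈ Hhat := QuotientGroup.leftRel_apply.mp hab
    refine QuotientGroup.leftRel_apply.mpr ?_
    have : (c * a)⁻¹ * (c * b) = a⁻¹ * b := by
      rw [mul_inv_rev, hcinv]
      calc a⁻¹ * c * (c * b) = a⁻¹ * (c * c) * b := by group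
      _ = a⁻¹ * b := by rw [hc2]; group
    rw [this]; exact h1
  let φ : (L ≃ₐ[ℚ] L) ⧸ Hhat → (L ≃ₐ[ℚ] L) ⧸ Hhat := Quotient.map' (fun g => c * g) hwd
  have hφmk : ∀ g : L ≃ₐ[ℚ] L, φ (mk g) = mk (c * g) := fun g => rfl
  have hφφ : ∀ q, φ (φ q) = q := by
    intro q
    obtain ⟨g, rfl⟩ := QuotientGroup.mk_surjective q
    show φ (φ (mk g)) = mk g
    rw [hφmk, hφmk, ← mul_assoc, hc2, one_mul]
  have hφinj : Function.Injective φ := Function.LeftInverse.injective hφφ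
  set A : Set ((L ≃ₐ[ℚ] L) ⧸ Hhat) := mk '' S⁻¹ with hA
  set B : Set ((L ≃ₐ[ℚ] L) ⧸ Hhat) := mk '' ((fun s => c * s) '' S⁻¹) with hB
  have hBA : B = φ '' A := by
    rw [hA, hB, Set.image_image, Set.image_image]
    exact Set.image_congr' (fun x => (hφmk x).symm)
  have hcardAB : B.ncard = A.ncard := by
    rw [hBA]; exact Set.ncard_image_of_injective A hφinj
  have hunion : A ∪ B = Set.univ := by
    ext q
    simp only [Set.mem_union, Set.mem_univ, iff_true]
    obtain ⟨γ, rfl⟩ := QuotientGroup.mk_surjective q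
    rcases part2 γ with h | ⟨s, hs, rfl⟩
    · exact Or.inl ⟨γ, h, rfl⟩
    · exact Or.inr ⟨c * s, ⟨s, hs, rfl⟩, rfl⟩
  have hdisjAB : Disjoint A B := by
    rw [Set.disjoint_left]
    rintro q ⟨ρ, hρ, rfl⟩ ⟨γ, ⟨s, hs, rfl⟩, hq⟩
    -- mk (c * s) = mk ρ
    have h1 : ρ⁻¹ * (c * s) ∈ Hhat := QuotientGroup.eq.mp hq.symm
    have h2 : c * s = ρ * (ρ⁻¹ * (c * s)) := by group
    have h3 : c * s ∈ S⁻¹ := by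
      rw [← part1, h2]
      exact Set.mul_mem_mul hρ (SetLike.mem_coe.mpr h1)
    exact Set.disjoint_left.mp part3 h3 ⟨s, hs, rfl⟩
  have hsum : A.ncard + B.ncard = Nat.card ((L ≃ₐ[ℚ] L) ⧸ Hhat) := by
    rw [← Set.ncard_union_eq hdisjAB (Set.toFinite A) (Set.toFinite B), hunion, Set.ncard_univ ((L ≃ₐ[ℚ] L) ⧸ Hhat)]
  rw [Nat.card_coe_set_eq]
  have : 2 * A.ncard = A.ncard + B.ncard := by rw [hcardAB]; ring
  rw [this, hsum, Subgroup.index_eq_card]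
end

section
/- Let K be a CM-field of degree 2g and let L be the normal closure of K over ℚ (inside a fixed algebraic closure). Then the degree [L : ℚ] divides 2^g · g!. -/
theorem my_normal_of_finrank_two (F K : Type*) [Field F] [Field K] [Algebra F K]
    (h2 : Module.finrank F K = 2) : Normal F K := by
  haveI : FiniteDimensional F K := Module.finite_of_finrank_eq_succ (n := 1) h2
  refine normal_iff.mpr fun x => ⟨Algebra.IsIntegral.isIntegral x, ?_⟩
  have hdeg : (minpoly F x).natDegree ≤ 2 := h2 ▸ minpoly.natDegree_le x
  have hroot : ((minpoly F x).map (algebraMap F K)).IsRoot x := by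
    rw [Polynomial.IsRoot, Polynomial.eval_map, ← Polynomial.aeval_def]
    exact minpoly.aeval F x
  rw [← Polynomial.mul_divByMonic_eq_iff_isRoot.mpr hroot]
  apply Polynomial.Splits.mul
  · exact Polynomial.Splits.X_sub_C _
  · apply Polynomial.Splits.of_natDegree_le_one
    rw [Polynomial.natDegree_divByMonic _ (Polynomial.monic_X_sub_C x)]
    have h1 : ((minpoly F x).map (algebraMap F K)).natDegree ≤ 2 := by
      rw [Polynomial.natDegree_map]; exact hdeg
    have hX : (Polynomial.X - Polynomial.C x).natDegree = 1 := Polynomial.natDegree_X_sub_C x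
    omega

theorem my_exists_involution (K : Type*) [Field K] [CharZero K] (F : Subfield K)
    (h2 : Module.finrank F K = 2) :
    ∃ ι : K ≃ₐ[ℚ] K, (∃ x, ι x ≠ x) ∧ ∀ x, ι (ι x) = x := by
  haveI : FiniteDimensional F K := Module.finite_of_finrank_eq_succ (n := 1) h2
  haveI : Normal F K := my_normal_of_finrank_two F K h2
  haveI : IsGalois F K := ⟨⟩
  have hcard : Fintype.card (K ≃ₐ[F] K) = 2 := by
    rw [← Nat.card_eq_fintype_card, IsGalois.card_aut_eq_finrank, h2]
  obtain ⟨σ, hσ⟩ := Fintype.exists_ne_of_one_lt_card (by rw [hcard]; norm_num) (1 : K ≃ₐ[F] K)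
  have hσ2 : σ * σ = 1 := by
    have h := pow_card_eq_one (x := σ)
    rwa [hcard, pow_two] at h
  refine ⟨AlgEquiv.restrictScalars ℚ σ, ?_, ?_⟩
  · by_contra h
    push_neg at h
    exact hσ (AlgEquiv.ext fun x => h x)
  · intro x
    have h := DFunLike.congr_fun hσ2 x
    simpa [AlgEquiv.mul_apply] using h


theorem my_card_dvd {G X : Type*} [Group G] [Fintype G] [Fintype X] (g : ℕ)
    (hX : Fintype.card X = 2 * g) (a : G →* Equiv.Perm X) (ha : Function.Injective a)
    (r : X → X) (hr2 : ∀ x, r (r x) = x) (hrf : ∀ x, r x ≠ x)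
    (hc : ∀ τ x, a τ (r x) = r (a τ x)) :
    Nat.card G ∣ 2 ^ g * Nat.factorial g := by
  classical
  have rinj : Function.Injective r := fun u v huv => by
    rw [← hr2 u, huv, hr2]
  have requiv : Equivalence (fun x y : X => x = y ∨ x = r y) := by
    constructor
    · intro x; exact Or.inl rfl
    · rintro x y (rfl | rfl)
      · exact Or.inl rfl
      · exact Or.inr (hr2 y).symm
    · rintro x y z (rfl | rfl) h2
      · exact h2
      · rcases h2 with rfl | rfl
        · exact Or.inr rfl
        · exact Or.inl (hr2 z)
  let s : Setoid X := ⟨fun x y => x = y ∨ x = r y, requiv⟩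
  letI : Fintype (Quotient s) := @Quotient.fintype X _ s (fun _ _ => Classical.dec _)
  -- basic facts about representatives
  have hout : ∀ x : X, (Quotient.mk s x).out = x ∨ (Quotient.mk s x).out = r x :=
    fun x => Quotient.mk_out (s := s) x
  -- the equivalence (Quotient s) × Bool ≃ X
  have houtinj : Function.Injective (Quotient.out : Quotient s → X) :=
    Quotient.out_injective
  let f : Quotient s × Bool → X := fun q => cond q.2 (r q.1.out) q.1.out
  have hmk_r : ∀ x : X, Quotient.mk s (r x) = Quotient.mk s x :=
    fun x => Quotient.sound (Or.inr rfl)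
  have hfb : Function.Bijective f := by
    constructor
    · rintro ⟨q, b⟩ ⟨q', b'⟩ h
      cases b <;> cases b' <;> simp only [f, cond_true, cond_false] at h
      · rw [houtinj h]
      · exfalso
        have hq : q = q' := by
          rw [← Quotient.out_eq q, ← Quotient.out_eq q', h, hmk_r]
        rw [hq] at h
        exact hrf q'.out h.symm
      · exfalso
        have hq : q = q' := by
          rw [← Quotient.out_eq q, ← Quotient.out_eq q', ← h, hmk_r]
        rw [hq] at h
        exact hrf q'.out h
      · rw [houtinj (rinj h)]
    · intro x
      rcases hout x with h | h
      · exact ⟨⟨Quotient.mk s x, false⟩, h⟩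
      · refine ⟨⟨Quotient.mk s x, true⟩, ?_⟩
        show r (Quotient.mk s x).out = x
        rw [h, hr2]
  have hcardQ : Fintype.card (Quotient s) = g := by
    have h := Fintype.card_congr (Equiv.ofBijective f hfb)
    rw [Fintype.card_prod, Fintype.card_bool, hX] at h
    omega
  -- the induced homomorphism on the quotient
  have hmap : ∀ (τ : G) (x y : X), (fun x y : X => x = y ∨ x = r y) x y →
      (fun x y : X => x = y ∨ x = r y) (a τ x) (a τ y) := by
    rintro τ x y (rfl | rfl)
    · exact Or.inl rfl
    · exact Or.inr (hc τ y)
  let pf : G → Quotient s → Quotient s := fun τ => Quotient.map (a τ) (hmap τ)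
  have pf_mk : ∀ τ x, pf τ (Quotient.mk s x) = Quotient.mk s (a τ x) := fun τ x => rfl
  have pf_comp : ∀ τ υ q, pf τ (pf υ q) = pf (τ * υ) q := by
    intro τ υ q
    induction q using Quotient.ind with
    | _ x => rw [pf_mk, pf_mk, pf_mk, map_mul, Equiv.Perm.mul_apply]
  have pf_one : ∀ q, pf 1 q = q := by
    intro q
    induction q using Quotient.ind with
    | _ x => rw [pf_mk, map_one, Equiv.Perm.one_apply]
  let Ψ : G →* Equiv.Perm (Quotient s) :=
    { toFun := fun τ => ⟨pf τ, pf τ⁻¹,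
        fun q => by rw [pf_comp, inv_mul_cancel, pf_one],
        fun q => by rw [pf_comp, mul_inv_cancel, pf_one]⟩
      map_one' := by
        ext q
        exact pf_one q
      map_mul' := fun τ υ => by
        ext q
        exact (pf_comp τ υ q).symm }
  have Ψ_apply : ∀ τ q, Ψ τ q = pf τ q := fun τ q => rfl
  -- kernel facts
  have hkeyN : ∀ τ ∈ Ψ.ker, ∀ x, a τ x = x ∨ a τ x = r x := by
    intro τ hτ x
    have h1 : Ψ τ = 1 := hτ
    have h2 : Quotient.mk s (a τ x) = Quotient.mk s x := by
      have h3 := Equiv.ext_iff.mp h1 (Quotient.mk s x)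
      rw [Ψ_apply, pf_mk, Equiv.Perm.one_apply] at h3
      exact h3
    exact Quotient.exact h2
  have hsq : ∀ τ ∈ Ψ.ker, τ * τ = 1 := by
    intro τ hτ
    apply ha
    ext x
    rw [map_mul, map_one, Equiv.Perm.mul_apply, Equiv.Perm.one_apply]
    rcases hkeyN τ hτ x with h | h
    · rw [h, h]
    · rw [h, hc, h, hr2]
  -- injection of the kernel into Q → Prop
  have hker_inj : ∀ τ ∈ Ψ.ker, ∀ τ' ∈ Ψ.ker,
      (∀ q : Quotient s, (a τ q.out = q.out) ↔ (a τ' q.out = q.out)) → τ = τ' := by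
    intro τ hτ τ' hτ' hiff
    apply ha
    ext x
    have key : ∀ q : Quotient s, a τ q.out = a τ' q.out := by
      intro q
      rcases hkeyN τ hτ q.out with h | h
      · rw [h]; exact ((hiff q).mp h).symm
      · rcases hkeyN τ' hτ' q.out with h' | h'
        · have hcontr : r q.out = q.out := by rw [← h]; exact (hiff q).mpr h'
          exact absurd hcontr (hrf q.out)
        · rw [h, h']
    rcases hout x with h | h
    · rw [← h]; exact key (Quotient.mk s x)
    · have hx : x = r (Quotient.mk s x).out := by rw [h, hr2]
      rw [hx, hc, hc, key]
  -- bound the kernel cardinality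
  have hJ : Function.Injective (fun (τ : Ψ.ker) (q : Quotient s) => ((a ↑τ) q.out = q.out : Prop)) := by
    intro τ τ' hJeq
    apply Subtype.ext
    apply hker_inj ↑τ τ.2 ↑τ' τ'.2
    intro q
    exact iff_of_eq (congrFun hJeq q)
  have hcardle : Fintype.card Ψ.ker ≤ 2 ^ g := by
    calc Fintype.card Ψ.ker ≤ Fintype.card (Quotient s → Prop) :=
          Fintype.card_le_of_injective _ hJ
      _ = 2 ^ g := by rw [Fintype.card_fun, Fintype.card_prop, hcardQ]
  have hprime : ∀ {p : ℕ}, p.Prime → p ∣ Fintype.card Ψ.ker → p = 2 := by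
    intro p hp hdvd
    haveI : Fact p.Prime := ⟨hp⟩
    obtain ⟨x, hx⟩ := exists_prime_orderOf_dvd_card p hdvd
    have hx2 : x ^ 2 = 1 := by
      rw [pow_two]
      apply Subtype.ext
      rw [Subgroup.coe_mul]
      exact hsq ↑x x.2
    have hdvd2 := orderOf_dvd_of_pow_eq_one hx2
    rw [hx] at hdvd2
    exact (Nat.prime_dvd_prime_iff_eq hp Nat.prime_two).mp hdvd2
  have hcardker : Fintype.card Ψ.ker ∣ 2 ^ g := by
    have hEq := Nat.eq_prime_pow_of_unique_prime_dvd (Fintype.card_ne_zero) hprime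
    rw [hEq]
    apply pow_dvd_pow
    have hle : 2 ^ (Fintype.card Ψ.ker).primeFactorsList.length ≤ 2 ^ g := hEq ▸ hcardle
    exact (Nat.pow_le_pow_iff_right (by norm_num)).mp hle
  have h1 : Nat.card G = Nat.card (G ⧸ Ψ.ker) * Nat.card Ψ.ker :=
    Subgroup.card_eq_card_quotient_mul_card_subgroup Ψ.ker
  have h2 : Nat.card (G ⧸ Ψ.ker) ∣ Nat.factorial g := by
    rw [Nat.card_congr (QuotientGroup.quotientKerEquivRange Ψ).toEquiv]
    have h3 := Subgroup.card_subgroup_dvd_card Ψ.range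
    rwa [Nat.card_eq_fintype_card (α := Equiv.Perm (Quotient s)), Fintype.card_perm, hcardQ] at h3
  rw [h1, show (2:ℕ) ^ g * Nat.factorial g = Nat.factorial g * 2 ^ g from Nat.mul_comm _ _]
  exact Nat.mul_dvd_mul h2 (by rw [Nat.card_eq_fintype_card]; exact hcardker)

set_option maxHeartbeats 1000000 in
/-- Let `K ⊆ ℂ` be a CM-field of degree `2g` and `L` its normal
closure over `ℚ` (the smallest Galois extension of `ℚ` containing `K`).  Then
`[L : ℚ]` divides `2^g ⬝ g!`. -/
theorem degree_normal_closure_of_CM_dvd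
    (K L : IntermediateField ℚ ℂ) [NumberField K] (g : ℕ)
    (hdeg : Module.finrank ℚ K = 2 * g)
    (hCM : IsCMField K)
    (hKL : K ≤ L) [IsGalois ℚ L]
    (hmin : ∀ M : IntermediateField ℚ ℂ, K ≤ M → IsGalois ℚ M → L ≤ M) :
    Module.finrank ℚ L ∣ 2 ^ g * Nat.factorial g := by
  classical
  haveI : Algebra.IsIntegral ℚ ↥K := Algebra.IsIntegral.of_finite ℚ ↥K
  obtain ⟨-, F, -, hF2⟩ := hCM
  obtain ⟨ι, hι1, hι2⟩ := my_exists_involution K F hF2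
  -- Step 1: L is finite dimensional over ℚ
  haveI : FiniteDimensional ℚ ↥L := by
    obtain ⟨θ, hθ⟩ := Field.exists_primitive_element ℚ ↥K
    have hθint : IsIntegral ℚ θ := Algebra.IsIntegral.isIntegral θ
    have hpsep : (minpoly ℚ θ).Separable := Algebra.IsSeparable.isSeparable ℚ θ
    have hsplits : ((minpoly ℚ θ).map (algebraMap ℚ ℂ)).Splits := IsAlgClosed.splits _
    haveI : (minpoly ℚ θ).IsSplittingField ℚ
        ↥(IntermediateField.adjoin ℚ ((minpoly ℚ θ).rootSet ℂ)) :=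
      IntermediateField.adjoin_rootSet_isSplittingField hsplits
    haveI : FiniteDimensional ℚ ↥(IntermediateField.adjoin ℚ ((minpoly ℚ θ).rootSet ℂ)) :=
      Polynomial.IsSplittingField.finiteDimensional _ (minpoly ℚ θ)
    haveI : IsGalois ℚ ↥(IntermediateField.adjoin ℚ ((minpoly ℚ θ).rootSet ℂ)) :=
      IsGalois.of_separable_splitting_field hpsep
    have hK : IntermediateField.adjoin ℚ {K.val θ} = K := by
      rw [← Set.image_singleton, ← IntermediateField.adjoin_map]
      erw [hθ]
      ext y
      constructor
      · rintro ⟨z, -, rfl⟩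
        exact z.2
      · intro hy
        exact ⟨⟨y, hy⟩, trivial, rfl⟩
    have hθM : K.val θ ∈ IntermediateField.adjoin ℚ ((minpoly ℚ θ).rootSet ℂ) := by
      apply IntermediateField.subset_adjoin
      rw [Polynomial.mem_rootSet]
      exact ⟨minpoly.ne_zero hθint, minpoly.aeval_algHom ℚ K.val θ⟩
    have hKM : K ≤ IntermediateField.adjoin ℚ ((minpoly ℚ θ).rootSet ℂ) :=
      le_trans (le_of_eq hK.symm)
        (IntermediateField.adjoin_le_iff.mpr (Set.singleton_subset_iff.mpr hθM))
    have hLM := hmin _ hKM inferInstance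
    exact FiniteDimensional.of_injective (IntermediateField.inclusion hLM).toLinearMap
      (IntermediateField.inclusion_injective hLM)
  haveI : Algebra.IsIntegral ℚ ↥L := Algebra.IsIntegral.of_finite ℚ ↥L
  -- Step 2: every ℚ-embedding of K into ℂ lands in L
  have hrange : ∀ (σ : ↥K →ₐ[ℚ] ℂ) (x : ↥K), σ x ∈ L := by
    intro σ x
    have hx : (x : ℂ) ∈ L := hKL x.2
    have hyint : IsIntegral ℚ (⟨(x : ℂ), hx⟩ : ↥L) := Algebra.IsIntegral.isIntegral _
    have hminpoly : minpoly ℚ (⟨(x : ℂ), hx⟩ : ↥L) = minpoly ℚ x := by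
      have h1 : minpoly ℚ (algebraMap ↥L ℂ (⟨(x : ℂ), hx⟩ : ↥L))
          = minpoly ℚ (⟨(x : ℂ), hx⟩ : ↥L) :=
        minpoly.algebraMap_eq (algebraMap ↥L ℂ).injective _
      have h2 : minpoly ℚ (algebraMap ↥K ℂ x) = minpoly ℚ x :=
        minpoly.algebraMap_eq (algebraMap ↥K ℂ).injective _
      rw [← h1, ← h2]
      rfl
    have hsplits : ((minpoly ℚ (⟨(x : ℂ), hx⟩ : ↥L)).map (algebraMap ℚ ↥L)).Splits :=
      Normal.splits inferInstance _
    have hroot : σ x ∈ (minpoly ℚ (⟨(x : ℂ), hx⟩ : ↥L)).rootSet ℂ := by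
      rw [Polynomial.mem_rootSet, hminpoly]
      exact ⟨minpoly.ne_zero (Algebra.IsIntegral.isIntegral x), minpoly.aeval_algHom ℚ σ x⟩
    rw [← Polynomial.Splits.image_rootSet hsplits L.val] at hroot
    obtain ⟨w, -, hw⟩ := hroot
    rw [← hw]
    exact w.2
  -- Step 3: the set of embeddings K → L and its cardinality
  let inv : (↥K →ₐ[ℚ] ℂ) → (↥K →ₐ[ℚ] ↥L) := fun σ =>
    { toFun := fun x => ⟨σ x, hrange σ x⟩
      map_one' := Subtype.ext (map_one σ)
      map_mul' := fun x y => Subtype.ext (map_mul σ x y)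
      map_zero' := Subtype.ext (map_zero σ)
      map_add' := fun x y => Subtype.ext (map_add σ x y)
      commutes' := fun q => Subtype.ext (σ.commutes q) }
  let E2 : (↥K →ₐ[ℚ] ↥L) ≃ (↥K →ₐ[ℚ] ℂ) :=
    { toFun := fun σ => L.val.comp σ
      invFun := inv
      left_inv := fun σ => by ext x; rfl
      right_inv := fun σ => by ext x; rfl }
  have hcardS : Fintype.card (↥K →ₐ[ℚ] ↥L) = 2 * g := by
    rw [Fintype.card_congr E2, AlgHom.card, hdeg]
  -- Step 4: the action of Gal(L/ℚ) on embeddings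
  let a : (↥L ≃ₐ[ℚ] ↥L) →* Equiv.Perm (↥K →ₐ[ℚ] ↥L) :=
    { toFun := fun τ =>
        { toFun := fun σ => (τ.toAlgHom).comp σ
          invFun := fun σ => (τ.symm.toAlgHom).comp σ
          left_inv := fun σ => by ext x; simp
          right_inv := fun σ => by ext x; simp }
      map_one' := by
        ext σ x
        simp
      map_mul' := fun τ υ => by
        ext σ x
        simp }
  have ha_apply : ∀ τ σ, a τ σ = (τ.toAlgHom).comp σ := fun τ σ => rfl
  -- Step 5: injectivity of the action
  have ha : Function.Injective a := by
    apply (MonoidHom.ker_eq_bot_iff a).mp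
    have hfix : IntermediateField.fixedField a.ker = ⊤ := by
      have hKM' : K ≤ IntermediateField.map L.val (IntermediateField.fixedField a.ker) := by
        intro x hx
        refine ⟨(IntermediateField.inclusion hKL) ⟨x, hx⟩, ?_, rfl⟩
        intro gg
        have hg : a gg.1 = 1 := gg.2
        have h1 : (gg.1 : ↥L ≃ₐ[ℚ] ↥L).toAlgHom.comp (IntermediateField.inclusion hKL)
            = IntermediateField.inclusion hKL := by
          show a gg.1 (IntermediateField.inclusion hKL) = _; rw [hg]; rfl
        have h2 := DFunLike.congr_fun h1 ⟨x, hx⟩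
        exact h2
      haveI : IsGalois ℚ
          ↥(IntermediateField.map L.val (IntermediateField.fixedField a.ker)) :=
        IsGalois.of_algEquiv
          (IntermediateField.equivMap (IntermediateField.fixedField a.ker) L.val)
      have hLM' := hmin _ hKM' inferInstance
      apply eq_top_iff.mpr
      intro y _
      have hy : (y : ℂ) ∈ IntermediateField.map L.val (IntermediateField.fixedField a.ker) :=
        hLM' y.2
      obtain ⟨w, hw, hwy⟩ := hy
      have : w = y := Subtype.ext hwy
      rwa [this] at hw
    have h := IntermediateField.fixingSubgroup_fixedField a.ker
    rw [hfix] at h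
    rw [← h]
    ext τ
    rw [IntermediateField.mem_fixingSubgroup_iff, Subgroup.mem_bot]
    constructor
    · intro hfixes
      exact AlgEquiv.ext fun y => hfixes y trivial
    · rintro rfl y _
      rfl
  -- Step 6: the involution on embeddings
  let r : (↥K →ₐ[ℚ] ↥L) → (↥K →ₐ[ℚ] ↥L) := fun σ => σ.comp ι.toAlgHom
  have hr2 : ∀ σ, r (r σ) = σ := by
    intro σ
    ext x
    simp [r, hι2]
  have hrf : ∀ σ, r σ ≠ σ := by
    intro σ h
    obtain ⟨x, hx⟩ := hι1
    apply hx
    have h3 := DFunLike.congr_fun h x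
    exact σ.toRingHom.injective h3
  have hc : ∀ τ σ, a τ (r σ) = r (a τ σ) := fun τ σ => rfl
  have hmain := my_card_dvd g hcardS a ha r hr2 hrf hc
  rwa [IsGalois.card_aut_eq_finrank] at hmain
end

section
/- Let K ⊆ ℂ be a CM-field of degree 2g, let L ⊆ ℂ be the normal closure of K over ℚ, let G = Gal(L/ℚ), let c ∈ G be the restriction of complex conjugation to L, and let H = {γ ∈ G : γ(x) = x for all x ∈ K}. Let S ⊆ G satisfy S·H = S and let G be the disjoint union of S and cS. Define Ĥ = {γ ∈ G : γS = S} and Ŝ = {σ^{-1} : σ ∈ S}. Then the stabilizer {γ ∈ G : γŜ = Ŝ} equals the right stabilizer H' = {γ ∈ G : Sγ = S}, which contains H; consequently the reflex field of the reflex pair (K̂, Ψ) is the fixed field L^{H'}, which is contained in K. Moreover, if the CM-type is primitive, i.e., H' = H, then the reflex of (K̂, Ψ) is exactly (K, Φ): the stabilizer {γ ∈ G : γŜ = Ŝ} equals H, its fixed field is K, and the double reflex type is encoded by (Ŝ)^{-1} = S. -/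
open scoped Pointwise

section GroupLemmas

variable {G : Type*} [Group G]

lemma right_mul_image_eq_iff (S : Set G) (γ : G) :
    (fun s => s * γ) '' S = S ↔ ∀ y : G, y * γ ∈ S ↔ y ∈ S := by
  constructor
  · intro h y
    constructor
    · intro hy
      rw [← h] at hy
      obtain ⟨s, hs, hsy⟩ := hy
      exact (mul_right_cancel hsy) ▸ hs
    · intro hy
      rw [← h]
      exact ⟨y, hy, rfl⟩
  · intro h
    ext x
    constructor
    · rintro ⟨s, hs, rfl⟩
      exact (h s).mpr hs
    · intro hx
      refine ⟨x * γ⁻¹, (h (x * γ⁻¹)).mp (by simpa using hx), by simp⟩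

lemma left_mul_image_inv_eq_iff (S : Set G) (γ : G) :
    (fun s => γ * s) '' S⁻¹ = S⁻¹ ↔ ∀ y : G, y * γ ∈ S ↔ y ∈ S := by
  constructor
  · intro h y
    constructor
    · intro hy
      have h1 : γ⁻¹ * y⁻¹ ∈ S⁻¹ := by
        rw [Set.mem_inv]
        simpa [mul_inv_rev] using hy
      have h2 : y⁻¹ ∈ S⁻¹ := by
        rw [← h]
        exact ⟨γ⁻¹ * y⁻¹, h1, by simp [mul_assoc]⟩
      simpa using h2
    · intro hy
      have h1 : y⁻¹ ∈ S⁻¹ := by simpa using hy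
      rw [← h] at h1
      obtain ⟨s, hs, hsy⟩ := h1
      have : s = γ⁻¹ * y⁻¹ := by
        rw [← hsy]; simp [mul_assoc]
      subst this
      rw [Set.mem_inv] at hs
      simpa [mul_inv_rev] using hs
  · intro h
    ext x
    simp only [Set.mem_image, Set.mem_inv]
    constructor
    · rintro ⟨s, hs, rfl⟩
      have : (s⁻¹ * γ⁻¹) * γ ∈ S := by simpa using hs
      have := (h (s⁻¹ * γ⁻¹)).mp this
      simpa [mul_inv_rev] using this
    · intro hx
      exact ⟨γ⁻¹ * x, by simpa [mul_inv_rev] using (h x⁻¹).mpr hx, by simp⟩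

end GroupLemmas

set_option maxHeartbeats 1000000 in
/-- In the reflex-field setting with `Ŝ = S⁻¹`, the stabilizer
`{γ : γŜ = Ŝ}` equals the right stabilizer `H' = {γ : Sγ = S}`, which contains `H`;
hence the reflex field of the reflex pair is `L^{H'} ⊆ K`.  If moreover the CM-type is
primitive (`H' = H`), then the reflex of the reflex is `(K, Φ)` itself: the stabilizer
of `Ŝ` is `H`, its fixed field is `K`, and `(Ŝ)⁻¹ = S`. -/
theorem reflex_of_reflex
    (K L : IntermediateField ℚ ℂ) [NumberField K] (g : ℕ)
    (hdeg : Module.finrank ℚ K = 2 * g)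
    (hCM : IsCMField K)
    (hKL : K ≤ L) [IsGalois ℚ L]
    (hmin : ∀ M : IntermediateField ℚ ℂ, K ≤ M → IsGalois ℚ M → L ≤ M)
    (c : L ≃ₐ[ℚ] L) (hc : ∀ x : L, (c x : ℂ) = starRingEnd ℂ (x : ℂ))
    (H : Set (L ≃ₐ[ℚ] L)) (hH : H = {γ | ∀ x : L, (x : ℂ) ∈ K → γ x = x})
    (S : Set (L ≃ₐ[ℚ] L)) (hSH : S * H = S)
    (hcover : ∀ γ : L ≃ₐ[ℚ] L, γ ∈ S ∨ γ ∈ (fun s => c * s) '' S)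
    (hdisj : Disjoint S ((fun s => c * s) '' S))
    (H' : Set (L ≃ₐ[ℚ] L)) (hH' : H' = {γ | (fun s => s * γ) '' S = S}) :
    {γ : L ≃ₐ[ℚ] L | (fun s => γ * s) '' S⁻¹ = S⁻¹} = H' ∧
    H ⊆ H' ∧
    (∀ x : L, (∀ γ : L ≃ₐ[ℚ] L, γ ∈ H' → γ x = x) → (x : ℂ) ∈ K) ∧
    (H' = H →
      {γ : L ≃ₐ[ℚ] L | (fun s => γ * s) '' S⁻¹ = S⁻¹} = H ∧
      {x : L | ∀ γ : L ≃ₐ[ℚ] L, (fun s => γ * s) '' S⁻¹ = S⁻¹ → γ x = x} =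
        {x : L | (x : ℂ) ∈ K} ∧
      (S⁻¹)⁻¹ = S) := by
  -- Part 1: the stabilizer equality.
  have part1 : {γ : L ≃ₐ[ℚ] L | (fun s => γ * s) '' S⁻¹ = S⁻¹} = H' := by
    ext γ
    simp only [Set.mem_setOf_eq, hH', left_mul_image_inv_eq_iff, right_mul_image_eq_iff]
  -- H is closed under inverses.
  have hHinv : ∀ γ : L ≃ₐ[ℚ] L, γ ∈ H → γ⁻¹ ∈ H := by
    intro γ hγ
    rw [hH] at hγ ⊢
    intro x hx
    have h2 : γ.symm (γ x) = γ.symm x := congrArg γ.symm (hγ x hx)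
    rw [AlgEquiv.symm_apply_apply] at h2
    exact h2.symm
  -- Part 2: H ⊆ H'.
  have part2 : H ⊆ H' := by
    intro γ hγ
    rw [hH', Set.mem_setOf_eq, right_mul_image_eq_iff]
    intro y
    constructor
    · intro hy
      have : (y * γ) * γ⁻¹ ∈ S := by
        rw [← hSH]
        exact Set.mul_mem_mul hy (hHinv γ hγ)
      simpa using this
    · intro hy
      rw [← hSH]
      exact Set.mul_mem_mul hy hγ
  -- L is finite dimensional over ℚ.
  have hFD : FiniteDimensional ℚ L := by
    set N : IntermediateField ℚ ℂ := IntermediateField.normalClosure ℚ K ℂ with hN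
    have hKN : K ≤ N := IntermediateField.le_normalClosure K
    have hsplits : ∀ x : ↥K, ((minpoly ℚ x).map (algebraMap ℚ ℂ)).Splits := fun x =>
      IsAlgClosed.splits _
    have hNC : IsNormalClosure ℚ ↥K ↥N :=
      Algebra.IsAlgebraic.isNormalClosure_normalClosure hsplits
    have hNnormal : Normal ℚ ↥N := hNC.normal
    have hNGal : IsGalois ℚ ↥N := ⟨⟩
    have hLN : L ≤ N := hmin N hKN hNGal
    have hNFD : FiniteDimensional ℚ ↥N := normalClosure.is_finiteDimensional ℚ ↥K ℂ
    exact FiniteDimensional.of_injective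
      (IntermediateField.inclusion hLN).toLinearMap (IntermediateField.inclusion hLN).injective
  -- The intermediate field of L corresponding to K.
  set K' : IntermediateField ℚ ↥L := (IntermediateField.inclusion hKL).fieldRange with hK'
  have hK'mem : ∀ x : ↥L, x ∈ K' ↔ (x : ℂ) ∈ K := by
    intro x
    constructor
    · rintro ⟨y, rfl⟩
      exact y.2
    · intro hx
      exact ⟨⟨(x : ℂ), hx⟩, rfl⟩
  -- H is the fixing subgroup of K'.
  have hHfix : H = (K'.fixingSubgroup : Set (↥L ≃ₐ[ℚ] ↥L)) := by
    ext γ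
    rw [hH, Set.mem_setOf_eq, SetLike.mem_coe, IntermediateField.mem_fixingSubgroup_iff]
    constructor
    · intro h x hx
      exact h x ((hK'mem x).mp hx)
    · intro h x hx
      exact h x ((hK'mem x).mpr hx)
  -- Part 3: elements fixed by H' lie in K.
  have part3 : ∀ x : ↥L, (∀ γ : ↥L ≃ₐ[ℚ] ↥L, γ ∈ H' → γ x = x) → (x : ℂ) ∈ K := by
    intro x hx
    have hfixH : ∀ γ : ↥L ≃ₐ[ℚ] ↥L, γ ∈ H → γ x = x := fun γ hγ => hx γ (part2 hγ)
    have hxfix : x ∈ IntermediateField.fixedField K'.fixingSubgroup := by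
      rintro ⟨γ, hγ⟩
      exact hfixH γ (by rw [hHfix]; exact hγ)
    rw [IsGalois.fixedField_fixingSubgroup K'] at hxfix
    exact (hK'mem x).mp hxfix
  refine ⟨part1, part2, part3, ?_⟩
  intro hprim
  refine ⟨part1.trans hprim, ?_, inv_inv S⟩
  ext x
  simp only [Set.mem_setOf_eq]
  have part1' : ∀ γ : ↥L ≃ₐ[ℚ] ↥L, ((fun s => γ * s) '' S⁻¹ = S⁻¹) ↔ γ ∈ H' :=
    fun γ => Set.ext_iff.mp part1 γ
  constructor
  · intro h
    apply part3
    intro γ hγ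
    exact h γ ((part1' γ).mpr hγ)
  · intro hx γ hγ
    have hm := (part1' γ).mp hγ
    rw [hprim, hH] at hm
    exact hm x hx
end
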